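/- If a = c b c* for some contraction c ∈ Mₙ(ℂ) and positive semidefinite b, then φ_α(a) ≤ φ_α(b) for every Choquet-type trace φ_α associated with a monotone increasing α : {0,...,n} → [0,∞) with α(0)=0. -/

import Mathlib

open Matrix BigOperators Finset
open scoped ComplexOrder

/-- The `i`-th largest eigenvalue (0-indexed) of a Hermitian matrix. -/
noncomputable def eigDesc {n : ℕ} (a : Matrix (Fin n) (Fin n) ℂ) (ha : a.IsHermitian) (i : Fin n) : ℝ :=
  ha.eigenvalues (Tuple.sort ha.eigenvalues i.rev)

/-- Eigenvalues in decreasing order, extended by `0` beyond the size. `eigN a ha i = λ_{i+1}(a)`. -/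
noncomputable def eigN {n : ℕ} (a : Matrix (Fin n) (Fin n) ℂ) (ha : a.IsHermitian) (i : ℕ) : ℝ :=
  if h : i < n then eigDesc a ha ⟨i, h⟩ else 0

/-- The non-linear trace of Choquet type:
`φ_α(a) = ∑_{i=1}^{n-1} (λ_i(a) - λ_{i+1}(a)) α(i) + λ_n(a) α(n)`. -/
noncomputable def choquetTrace {n : ℕ} (α : ℕ → ℝ) (a : Matrix (Fin n) (Fin n) ℂ)
    (ha : a.IsHermitian) : ℝ :=
  ∑ i ∈ Finset.range n, (eigN a ha i - eigN a ha (i + 1)) * α (i + 1)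

/-- Functional calculus of a Hermitian matrix `a` by a function `f : ℝ → ℝ` on its eigenvalues. -/
noncomputable def funCalc {n : ℕ} (f : ℝ → ℝ) (a : Matrix (Fin n) (Fin n) ℂ)
    (ha : a.IsHermitian) : Matrix (Fin n) (Fin n) ℂ :=
  (ha.eigenvectorUnitary : Matrix (Fin n) (Fin n) ℂ) *
    Matrix.diagonal (fun i => (f (ha.eigenvalues i) : ℂ)) *
    star (ha.eigenvectorUnitary : Matrix (Fin n) (Fin n) ℂ)

/-- The absolute value `|a| = (a^* a)^{1/2}` of a matrix. -/
noncomputable def matAbs {n : ℕ} (a : Matrix (Fin n) (Fin n) ℂ) : Matrix (Fin n) (Fin n) ℂ :=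
  ((Matrix.posSemidef_conjTranspose_mul_self a).1.eigenvectorUnitary : Matrix (Fin n) (Fin n) ℂ) *
    Matrix.diagonal ((↑) ∘ (√·) ∘ (Matrix.posSemidef_conjTranspose_mul_self a).1.eigenvalues) *
    (star (Matrix.posSemidef_conjTranspose_mul_self a).1.eigenvectorUnitary : Matrix (Fin n) (Fin n) ℂ)

theorem matAbs_isHermitian {n : ℕ} (a : Matrix (Fin n) (Fin n) ℂ) : (matAbs a).IsHermitian :=
  isHermitian_mul_mul_conjTranspose _ (isHermitian_diagonal_of_self_adjoint _ (by ext i; simp))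

set_option maxHeartbeats 1000000
set_option synthInstance.maxHeartbeats 1000000


lemma abel_aux (e g : ℕ → ℝ) (n : ℕ) :
    ∑ i ∈ Finset.range n, (e i - e (i+1)) * g (i+1)
      = ∑ i ∈ Finset.range n, e i * (g (i+1) - g i) + e 0 * g 0 - e n * g n := by
  induction n with
  | zero => simp
  | succ m ih => rw [Finset.sum_range_succ, Finset.sum_range_succ, ih]; ring

lemma dot_self_eq_normSq {n : ℕ} (v : Fin n → ℂ) :
    star v ⬝ᵥ v = ((∑ j, Complex.normSq (v j) : ℝ) : ℂ) := by
  simp only [dotProduct, Pi.star_apply, Complex.ofReal_sum]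
  exact Finset.sum_congr rfl fun j _ => by
    rw [RCLike.star_def, Complex.normSq_eq_conj_mul_self]

lemma normSq_mulVec_unitary {n : ℕ} (U : Matrix (Fin n) (Fin n) ℂ)
    (hU : U ∈ Matrix.unitaryGroup (Fin n) ℂ) (v : Fin n → ℂ) :
    ∑ j, Complex.normSq ((U *ᵥ v) j) = ∑ j, Complex.normSq (v j) := by
  have h1 : star (U *ᵥ v) ⬝ᵥ (U *ᵥ v) = star v ⬝ᵥ v := by
    rw [star_mulVec, dotProduct_mulVec, vecMul_vecMul,
      show Uᴴ * U = 1 from Matrix.mem_unitaryGroup_iff'.mp hU, vecMul_one]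
  rw [dot_self_eq_normSq, dot_self_eq_normSq] at h1
  exact_mod_cast h1

lemma quadForm_eq {n : ℕ} (x : Matrix (Fin n) (Fin n) ℂ) (hx : x.IsHermitian) (v : Fin n → ℂ) :
    star v ⬝ᵥ (x *ᵥ v) =
      ((∑ j, hx.eigenvalues j *
        Complex.normSq ((star (hx.eigenvectorUnitary : Matrix (Fin n) (Fin n) ℂ) *ᵥ v) j) : ℝ) : ℂ) := by
  set U : Matrix (Fin n) (Fin n) ℂ := (hx.eigenvectorUnitary : Matrix (Fin n) (Fin n) ℂ) with hUdef
  conv_lhs => rw [hx.spectral_theorem, Unitary.conjStarAlgAut_apply]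
  rw [← mulVec_mulVec, ← mulVec_mulVec, dotProduct_mulVec]
  have hsw : star v ᵥ* U = star (star U *ᵥ v) := by
    rw [star_mulVec, star_eq_conjTranspose, conjTranspose_conjTranspose]
  rw [hsw, Complex.ofReal_sum]
  simp only [dotProduct, mulVec_diagonal, Pi.star_apply, Function.comp_apply]
  exact Finset.sum_congr rfl fun j _ => by
    rw [RCLike.star_def, Complex.ofReal_mul, Complex.normSq_eq_conj_mul_self, ← hUdef]
    exact mul_left_comm ((starRingEnd ℂ) ((star U *ᵥ v) j)) ((hx.eigenvalues j : ℂ)) ((star U *ᵥ v) j)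

lemma normSq_mulVec_le {n : ℕ} (c : Matrix (Fin n) (Fin n) ℂ)
    (hc : ‖Matrix.toEuclideanCLM (𝕜 := ℂ) c‖ ≤ 1) (v : Fin n → ℂ) :
    ∑ j, Complex.normSq ((c *ᵥ v) j) ≤ ∑ j, Complex.normSq (v j) := by
  set x : EuclideanSpace ℂ (Fin n) := (WithLp.equiv 2 _).symm v with hx
  have h := (Matrix.toEuclideanCLM (𝕜 := ℂ) c).le_opNorm x
  have h2 : ‖Matrix.toEuclideanCLM (𝕜 := ℂ) c x‖ ≤ ‖x‖ := by
    refine h.trans ?_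
    have := norm_nonneg x
    nlinarith
  have heq : Matrix.toEuclideanCLM (𝕜 := ℂ) c x = (WithLp.equiv 2 _).symm (c *ᵥ v) := by
    rw [hx]; rfl
  rw [heq] at h2
  have norm_eq : ∀ z : Fin n → ℂ,
      ‖((WithLp.equiv 2 (Fin n → ℂ)).symm z : EuclideanSpace ℂ (Fin n))‖
        = Real.sqrt (∑ j, Complex.normSq (z j)) := by
    intro z
    rw [EuclideanSpace.norm_eq]
    congr 1
    exact Finset.sum_congr rfl fun j _ => by
      exact Complex.sq_norm _
  rw [norm_eq, hx, norm_eq] at h2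
  have hA : (0:ℝ) ≤ ∑ j, Complex.normSq ((c *ᵥ v) j) :=
    Finset.sum_nonneg fun j _ => Complex.normSq_nonneg _
  have hB : (0:ℝ) ≤ ∑ j, Complex.normSq (v j) :=
    Finset.sum_nonneg fun j _ => Complex.normSq_nonneg _
  calc ∑ j, Complex.normSq ((c *ᵥ v) j)
      = (Real.sqrt (∑ j, Complex.normSq ((c *ᵥ v) j)))^2 := (Real.sq_sqrt hA).symm
    _ ≤ (Real.sqrt (∑ j, Complex.normSq (v j)))^2 := by
        apply pow_le_pow_left₀ (Real.sqrt_nonneg _) h2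
    _ = _ := Real.sq_sqrt hB


lemma normSq_star_mulVec_le {n : ℕ} (c : Matrix (Fin n) (Fin n) ℂ)
    (hc : ‖Matrix.toEuclideanCLM (𝕜 := ℂ) c‖ ≤ 1) (v : Fin n → ℂ) :
    ∑ j, Complex.normSq ((star c *ᵥ v) j) ≤ ∑ j, Complex.normSq (v j) := by
  refine normSq_mulVec_le (star c) ?_ v
  rw [map_star, ContinuousLinearMap.star_eq_adjoint]
  exact (LinearIsometryEquiv.norm_map ContinuousLinearMap.adjoint _).trans_le hc

lemma eigDesc_conj_le {n : ℕ} (a b c : Matrix (Fin n) (Fin n) ℂ)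
    (ha : a.PosSemidef) (hb : b.PosSemidef)
    (hc : ‖Matrix.toEuclideanCLM (𝕜 := ℂ) c‖ ≤ 1) (habc : a = c * b * star c) (i : Fin n) :
    eigDesc a ha.1 i ≤ eigDesc b hb.1 i := by
  classical
  set μa := ha.1.eigenvalues with hμa
  set μb := hb.1.eigenvalues with hμb
  set Ua : Matrix (Fin n) (Fin n) ℂ := (ha.1.eigenvectorUnitary : Matrix (Fin n) (Fin n) ℂ) with hUa
  set Ub : Matrix (Fin n) (Fin n) ℂ := (hb.1.eigenvectorUnitary : Matrix (Fin n) (Fin n) ℂ) with hUb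
  set σa := Tuple.sort μa with hσa
  set σb := Tuple.sort μb with hσb
  set Sa : Finset (Fin n) := (Finset.Ici i.rev).image σa with hSa
  set Tb : Finset (Fin n) := (Finset.Iic i.rev).image σb with hTb
  have hSacard : Sa.card = i.val + 1 := by
    rw [hSa, Finset.card_image_of_injective _ σa.injective, Fin.card_Ici, Fin.val_rev]
    have := i.is_lt; omega
  have hTbcard : Tb.card = n - i.val := by
    rw [hTb, Finset.card_image_of_injective _ σb.injective, Fin.card_Iic, Fin.val_rev]
    have := i.is_lt; omega
  let L : (Fin n → ℂ) →ₗ[ℂ] ({j // j ∉ Sa} → ℂ) × ({j // j ∉ Tb} → ℂ) :=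
    { toFun := fun v => (fun j => ((star Ua) *ᵥ v) j.1,
        fun j => ((star Ub) *ᵥ ((star c) *ᵥ v)) j.1),
      map_add' := fun v w => by
        refine Prod.ext ?_ ?_ <;> funext j <;> simp [Matrix.mulVec_add]
      map_smul' := fun r v => by
        refine Prod.ext ?_ ?_ <;> funext j <;> simp [Matrix.mulVec_smul] }
  have hnotinj : ¬ Function.Injective L := by
    intro hinj
    have hle := LinearMap.finrank_le_finrank_of_injective hinj
    rw [Module.finrank_pi, Module.finrank_prod, Module.finrank_pi, Module.finrank_pi] at hle
    rw [Fintype.card_fin] at hle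
    have h1 : Fintype.card {j // j ∉ Sa} = n - Sa.card := by
      rw [Fintype.card_subtype_compl, Fintype.card_fin, Fintype.card_coe]
    have h2 : Fintype.card {j // j ∉ Tb} = n - Tb.card := by
      rw [Fintype.card_subtype_compl, Fintype.card_fin, Fintype.card_coe]
    rw [h1, h2, hSacard, hTbcard] at hle
    have := i.is_lt; omega
  have hker : LinearMap.ker L ≠ ⊥ := fun h => hnotinj (LinearMap.ker_eq_bot.mp h)
  obtain ⟨v, hvker, hvne⟩ := (Submodule.ne_bot_iff _).mp hker
  rw [LinearMap.mem_ker] at hvker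
  set u := (star c) *ᵥ v with hu
  have hwa0 : ∀ j, j ∉ Sa → ((star Ua) *ᵥ v) j = 0 := by
    intro j hj
    have h1 : (L v).1 = 0 := by rw [hvker]; rfl
    exact congrFun h1 ⟨j, hj⟩
  have hwb0 : ∀ j, j ∉ Tb → ((star Ub) *ᵥ u) j = 0 := by
    intro j hj
    have h1 : (L v).2 = 0 := by rw [hvker]; rfl
    exact congrFun h1 ⟨j, hj⟩
  have hmid : star v ⬝ᵥ (a *ᵥ v) = star u ⬝ᵥ (b *ᵥ u) := by
    rw [habc, ← mulVec_mulVec, ← mulVec_mulVec, dotProduct_mulVec]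
    congr 1
    rw [hu, star_mulVec, star_eq_conjTranspose, conjTranspose_conjTranspose]
  have hreal : (∑ j, μa j * Complex.normSq ((star Ua *ᵥ v) j))
      = ∑ j, μb j * Complex.normSq ((star Ub *ᵥ u) j) := by
    rw [quadForm_eq a ha.1 v, quadForm_eq b hb.1 u] at hmid
    exact_mod_cast hmid
  have hsum_a : ∑ j, Complex.normSq ((star Ua *ᵥ v) j) = ∑ j, Complex.normSq (v j) :=
    normSq_mulVec_unitary _ (Unitary.star_mem ha.1.eigenvectorUnitary.2) v
  have hsum_b : ∑ j, Complex.normSq ((star Ub *ᵥ u) j) = ∑ j, Complex.normSq (u j) :=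
    normSq_mulVec_unitary _ (Unitary.star_mem hb.1.eigenvectorUnitary.2) u
  have hsbound : eigDesc a ha.1 i * (∑ j, Complex.normSq (v j))
      ≤ ∑ j, μa j * Complex.normSq ((star Ua *ᵥ v) j) := by
    rw [← hsum_a, Finset.mul_sum]
    refine Finset.sum_le_sum fun j _ => ?_
    by_cases hj : j ∈ Sa
    · obtain ⟨k, hk, rfl⟩ := Finset.mem_image.mp hj
      have hk' : i.rev ≤ k := Finset.mem_Ici.mp hk
      exact mul_le_mul_of_nonneg_right (Tuple.monotone_sort μa hk') (Complex.normSq_nonneg _)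
    · rw [hwa0 j hj]; simp
  have ht0 : 0 ≤ eigDesc b hb.1 i := hb.eigenvalues_nonneg _
  have htbound : ∑ j, μb j * Complex.normSq ((star Ub *ᵥ u) j)
      ≤ eigDesc b hb.1 i * (∑ j, Complex.normSq (v j)) := by
    have hcon : ∑ j, Complex.normSq (u j) ≤ ∑ j, Complex.normSq (v j) := by
      rw [hu]
      exact normSq_star_mulVec_le c hc v
    calc ∑ j, μb j * Complex.normSq ((star Ub *ᵥ u) j)
        ≤ ∑ j, eigDesc b hb.1 i * Complex.normSq ((star Ub *ᵥ u) j) := by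
          refine Finset.sum_le_sum fun j _ => ?_
          by_cases hj : j ∈ Tb
          · obtain ⟨k, hk, rfl⟩ := Finset.mem_image.mp hj
            have hk' : k ≤ i.rev := Finset.mem_Iic.mp hk
            exact mul_le_mul_of_nonneg_right (Tuple.monotone_sort μb hk') (Complex.normSq_nonneg _)
          · rw [hwb0 j hj]; simp
      _ = eigDesc b hb.1 i * ∑ j, Complex.normSq ((star Ub *ᵥ u) j) := (Finset.mul_sum _ _ _).symm
      _ = eigDesc b hb.1 i * ∑ j, Complex.normSq (u j) := by rw [hsum_b]
      _ ≤ _ := mul_le_mul_of_nonneg_left hcon ht0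
  have hN : 0 < ∑ j, Complex.normSq (v j) := by
    obtain ⟨j, hj⟩ : ∃ j, v j ≠ 0 := by
      by_contra h; push_neg at h; exact hvne (funext h)
    exact Finset.sum_pos' (fun k _ => Complex.normSq_nonneg _)
      ⟨j, Finset.mem_univ j, Complex.normSq_pos.mpr hj⟩
  have : eigDesc a ha.1 i * (∑ j, Complex.normSq (v j))
      ≤ eigDesc b hb.1 i * (∑ j, Complex.normSq (v j)) :=
    hsbound.trans (hreal.le.trans htbound)
  exact le_of_mul_le_mul_right this hN


/-- if `a = c b c^*` with `c` a contraction, then `φ_α(a) ≤ φ_α(b)`. -/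
theorem stmt7 (n : ℕ) (α : ℕ → ℝ) (hα0 : α 0 = 0)
    (hmono : ∀ i j : ℕ, i ≤ j → j ≤ n → α i ≤ α j)
    (a b c : Matrix (Fin n) (Fin n) ℂ) (ha : a.PosSemidef) (hb : b.PosSemidef)
    (hc : ‖Matrix.toEuclideanCLM (𝕜 := ℂ) c‖ ≤ 1) (habc : a = c * b * star c) :
    choquetTrace α a ha.1 ≤ choquetTrace α b hb.1 := by
  unfold choquetTrace
  rw [abel_aux (eigN a ha.1) α n, abel_aux (eigN b hb.1) α n, hα0]
  have ea : eigN a ha.1 n = 0 := dif_neg (lt_irrefl n)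
  have eb : eigN b hb.1 n = 0 := dif_neg (lt_irrefl n)
  rw [ea, eb]
  simp only [mul_zero, zero_mul, add_zero, sub_zero]
  refine Finset.sum_le_sum fun i hi => ?_
  have hi' : i < n := Finset.mem_range.mp hi
  have hβ : 0 ≤ α (i + 1) - α i :=
    sub_nonneg.mpr (hmono i (i + 1) (Nat.le_succ i) hi')
  refine mul_le_mul_of_nonneg_right ?_ hβ
  unfold eigN
  rw [dif_pos hi', dif_pos hi']
  exact eigDesc_conj_le a b c ha hb hc habc ⟨i, hi'⟩
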